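/- Let ε > 0, A₁, A₂ > 0, p ∈ ℝ, 0 < s < L, and let h : [0, L] → (0, ∞) be continuously differentiable on [0, L] with h'(0) = 0 and h'(L) = 0, twice continuously differentiable on (0, s) and on (s, L), satisfying the axisymmetric steady-state equation h''(r) + h'(r)/r = A₁·Π_ε(h(r)) − p on (0, s) and h''(r) + h'(r)/r = A₂·Π_ε(h(r)) − p on (s, L), and suppose that r ↦ h'(r)²/r is integrable on (0, L). Then (A₂ − A₁)·U_ε(h(s)) = A₂·U_ε(h(L)) − A₁·U_ε(h(0)) + p·(h(0) − h(L)) − ∫₀^L h'(r)²/r dr. -/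

import Mathlib

/-- The disjoining pressure `Π_ε(h) = ε²/h³ − ε³/h⁴`. -/
noncomputable def disjoiningPressure (ε h : ℝ) : ℝ := ε^2 / h^3 - ε^3 / h^4

/-- The wetting potential `U_ε(h) = −ε²/(2h²) + ε³/(3h³)`. -/
noncomputable def wettingPotential (ε h : ℝ) : ℝ := -ε^2 / (2*h^2) + ε^3 / (3*h^3)

lemma hasDerivAt_wetting (ε y : ℝ) (hy : y ≠ 0) :
    HasDerivAt (wettingPotential ε) (disjoiningPressure ε y) y := by
  have h2 : (2*y^2) ≠ 0 := by positivity
  have h3 : (3*y^3) ≠ 0 := by simp [pow_eq_zero_iff, hy]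
  have hA : HasDerivAt (fun y : ℝ => 2*y^2) (2*(2*y^1)) y :=
    (hasDerivAt_pow 2 y).const_mul 2
  have hB : HasDerivAt (fun y : ℝ => 3*y^3) (3*(3*y^2)) y :=
    (hasDerivAt_pow 3 y).const_mul 3
  have h1 := ((hasDerivAt_const y (-ε^2)).div hA h2).add
    ((hasDerivAt_const y (ε^3)).div hB h3)
  have heq : disjoiningPressure ε y = ε ^ 2 * (2 * (2 * y ^ 1)) / (2 * y ^ 2) ^ 2 +
      (0 * (3 * y ^ 3) - ε ^ 3 * (3 * (3 * y ^ 2))) / (3 * y ^ 3) ^ 2 := by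
    simp only [disjoiningPressure]
    field_simp
    ring
  rw [heq]
  exact h1.congr_deriv (by ring) |>.congr_of_eventuallyEq (by
    filter_upwards with z; simp [wettingPotential])

theorem stmt_18 (ε A₁ A₂ p s L : ℝ) (hε : 0 < ε) (hA₁ : 0 < A₁) (hA₂ : 0 < A₂)
    (hs : 0 < s) (hsL : s < L)
    (h h' : ℝ → ℝ)
    (hpos : ∀ r ∈ Set.Icc 0 L, 0 < h r)
    (hd1 : ∀ r ∈ Set.Icc 0 L, HasDerivWithinAt h (h' r) (Set.Icc 0 L) r)
    (hcont : ContinuousOn h' (Set.Icc 0 L))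
    (hb0 : h' 0 = 0) (hbL : h' L = 0)
    -- the axisymmetric steady-state equation h'' + h'/r = A₁·Π_ε(h) − p on (0, s)
    (hd2a : ∀ r ∈ Set.Ioo 0 s,
      HasDerivAt h' (A₁ * disjoiningPressure ε (h r) - p - h' r / r) r)
    -- the axisymmetric steady-state equation h'' + h'/r = A₂·Π_ε(h) − p on (s, L)
    (hd2b : ∀ r ∈ Set.Ioo s L,
      HasDerivAt h' (A₂ * disjoiningPressure ε (h r) - p - h' r / r) r)
    (hint : IntervalIntegrable (fun r => (h' r)^2 / r) MeasureTheory.volume 0 L) :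
    (A₂ - A₁) * wettingPotential ε (h s) =
      A₂ * wettingPotential ε (h L) - A₁ * wettingPotential ε (h 0)
        + p * (h 0 - h L) - ∫ r in (0:ℝ)..L, (h' r)^2 / r := by
  have h0L : (0:ℝ) ≤ L := le_trans hs.le hsL.le
  have hhc : ContinuousOn h (Set.Icc 0 L) := fun r hr => (hd1 r hr).continuousWithinAt
  have hderiv_h : ∀ r ∈ Set.Ioo (0:ℝ) L, HasDerivAt h (h' r) r := fun r hr =>
    (hd1 r (Set.Ioo_subset_Icc_self hr)).hasDerivAt (Icc_mem_nhds hr.1 hr.2)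
  have hwc : ContinuousOn (fun r => wettingPotential ε (h r)) (Set.Icc 0 L) := fun r hr =>
    ((hasDerivAt_wetting ε (h r) (ne_of_gt (hpos r hr))).continuousAt).comp_continuousWithinAt
      (hhc r hr)
  -- the two "energy" functions
  set g₁ : ℝ → ℝ := fun r => (h' r)^2/2 + p * h r - A₁ * wettingPotential ε (h r) with hg₁
  set g₂ : ℝ → ℝ := fun r => (h' r)^2/2 + p * h r - A₂ * wettingPotential ε (h r) with hg₂
  have hsub1 : Set.Icc (0:ℝ) s ⊆ Set.Icc 0 L := Set.Icc_subset_Icc le_rfl hsL.le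
  have hsub2 : Set.Icc s L ⊆ Set.Icc 0 L := Set.Icc_subset_Icc hs.le le_rfl
  have hgc : ∀ A : ℝ, ContinuousOn (fun r => (h' r)^2/2 + p * h r - A * wettingPotential ε (h r))
      (Set.Icc 0 L) := fun A =>
    (((hcont.pow 2).div_const 2).add (hhc.const_smul p)).sub (hwc.const_smul A)
  have hgd : ∀ (A : ℝ) (r : ℝ), r ∈ Set.Ioo (0:ℝ) L →
      HasDerivAt h' (A * disjoiningPressure ε (h r) - p - h' r / r) r →
      HasDerivAt (fun r => (h' r)^2/2 + p * h r - A * wettingPotential ε (h r))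
        (-((h' r)^2 / r)) r := by
    intro A r hr hD
    have hrne : r ≠ 0 := ne_of_gt hr.1
    have hhr : HasDerivAt h (h' r) r := hderiv_h r hr
    have hne : h r ≠ 0 := ne_of_gt (hpos r (Set.Ioo_subset_Icc_self hr))
    have hw : HasDerivAt (fun r => wettingPotential ε (h r))
        (disjoiningPressure ε (h r) * h' r) r :=
      (hasDerivAt_wetting ε (h r) hne).comp r hhr
    have := (((hD.pow 2).div_const 2).add (hhr.const_mul p)).sub (hw.const_mul A)
    convert this using 1
    · rfl
    · rfl
    · rfl
    field_simp
    ring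
  -- integrability of the pieces
  have hmem : ∀ x : ℝ, 0 ≤ x → x ≤ L → x ∈ Set.uIcc (0:ℝ) L := fun x h1 h2 => by
    rw [Set.uIcc_of_le h0L]; exact ⟨h1, h2⟩
  have hint1 : IntervalIntegrable (fun r => -((h' r)^2 / r)) MeasureTheory.volume 0 s := by
    exact (hint.mono_set
      (Set.uIcc_subset_uIcc (hmem 0 le_rfl h0L) (hmem s hs.le hsL.le))).neg
  have hint2 : IntervalIntegrable (fun r => -((h' r)^2 / r)) MeasureTheory.volume s L := by
    exact (hint.mono_set
      (Set.uIcc_subset_uIcc (hmem s hs.le hsL.le) (hmem L h0L le_rfl))).neg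
  have eq1 : ∫ r in (0:ℝ)..s, -((h' r)^2 / r) = g₁ s - g₁ 0 :=
    intervalIntegral.integral_eq_sub_of_hasDerivAt_of_le hs.le
      ((hgc A₁).mono hsub1)
      (fun r hr => hgd A₁ r ⟨hr.1, lt_trans hr.2 hsL⟩ (hd2a r hr)) hint1
  have eq2 : ∫ r in s..L, -((h' r)^2 / r) = g₂ L - g₂ s :=
    intervalIntegral.integral_eq_sub_of_hasDerivAt_of_le hsL.le
      ((hgc A₂).mono hsub2)
      (fun r hr => hgd A₂ r ⟨lt_trans hs hr.1, hr.2⟩ (hd2b r hr)) hint2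
  have hadd : (∫ r in (0:ℝ)..s, -((h' r)^2 / r)) + ∫ r in s..L, -((h' r)^2 / r)
      = ∫ r in (0:ℝ)..L, -((h' r)^2 / r) :=
    intervalIntegral.integral_add_adjacent_intervals hint1 hint2
  have hneg : ∫ r in (0:ℝ)..L, -((h' r)^2 / r) = -∫ r in (0:ℝ)..L, (h' r)^2 / r :=
    intervalIntegral.integral_neg
  have key : g₁ s - g₁ 0 + (g₂ L - g₂ s) = -∫ r in (0:ℝ)..L, (h' r)^2 / r := by
    rw [← eq1, ← eq2, hadd, hneg]
  simp only [hg₁, hg₂, hb0, hbL] at key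
  ring_nf at key ⊢
  linarith
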